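/- Let T' and T'' be finite connected preorders on disjoint sets X₁ and X₂. Then δ(T' ↘ T'') = T' ⊗ T'' + (T' ⊗ 1) ↘ δ(T'') + (1 ⊗ T') ↘ δ(T''), where T' ↘ T'' := Σ_{v ∈ X₂} T' ↘_v T'', and where (T' ⊗ 1) ↘ (A ⊗ B) := (T' ↘ A) ⊗ B and (1 ⊗ T') ↘ (A ⊗ B) := A ⊗ (T' ↘ B). -/

import Mathlib

open scoped Classical

/-- A finite preorder (quasi-order, i.e. finite topological space) on a subset
(`carrier`) of an ambient type `α`. -/
structure FinPre (α : Type*) where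
  carrier : Finset α
  le : α → α → Prop
  mem_of_le : ∀ ⦃x y⦄, le x y → x ∈ carrier ∧ y ∈ carrier
  le_refl : ∀ x ∈ carrier, le x x
  le_trans : ∀ ⦃x y z⦄, le x y → le y z → le x z

namespace FinPre

variable {α : Type*} [DecidableEq α]

/-- The strict relation `x < y`, i.e. `x ≤ y` and not `y ≤ x`. -/
def lt (T : FinPre α) (x y : α) : Prop := T.le x y ∧ ¬ T.le y x

/-- The equivalence `x ~ y` iff `x ≤ y` and `y ≤ x`. -/
def equiv (T : FinPre α) (x y : α) : Prop := T.le x y ∧ T.le y x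

/-- The bag (equivalence class) of a vertex `v`. -/
noncomputable def bag (T : FinPre α) (v : α) : Finset α :=
  T.carrier.filter (fun x => T.equiv x v)

/-- `min(T)`: the set of minimal elements (`y ≤ x` implies `x ≤ y`). -/
noncomputable def minSet (T : FinPre α) : Finset α :=
  T.carrier.filter (fun x => ∀ y, T.le y x → T.le x y)

/-- Connectivity of a subset `S`, for the graph with edges between comparable pairs. -/
def ConnOn (T : FinPre α) (S : Set α) : Prop :=
  ∀ x ∈ S, ∀ y ∈ S,
    Relation.ReflTransGen (fun a b => a ∈ S ∧ b ∈ S ∧ (T.le a b ∨ T.le b a)) x y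

/-- A finite preorder is connected if it is nonempty and any two elements are linked by
a chain of comparable pairs. -/
def Connected (T : FinPre α) : Prop :=
  T.carrier.Nonempty ∧ T.ConnOn ↑T.carrier

/-- `I` is a connected component of `S` (for the comparability graph of `T`). -/
def IsCC (T : FinPre α) (S I : Set α) : Prop :=
  I.Nonempty ∧ I ⊆ S ∧ T.ConnOn I ∧
    ∀ x ∈ I, ∀ y ∈ S, (T.le x y ∨ T.le y x) → y ∈ I

/-- `Y_- = {x ∉ Y : ∃ y ∈ Y, x ≤ y}`. -/
noncomputable def below (T : FinPre α) (Y : Finset α) : Finset α :=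
  (T.carrier \ Y).filter (fun x => ∃ y ∈ Y, T.le x y)

/-- `Y ◎ T` : `Y` is an upper (open) set, the image of `Y_-` in the quotient poset `T̄`
is a single bag belonging to `min(T̄)` (i.e. `Y_-` is nonempty, contained in the bag of
some minimal `w`), and `Y` is a connected component of
`{x : y < x for all y ∈ Y_-}`. -/
def Circ (T : FinPre α) (Y : Finset α) : Prop :=
  (∀ x ∈ Y, ∀ z, T.le x z → z ∈ Y) ∧
  ∃ w ∈ T.below Y, w ∈ T.minSet ∧ (∀ x ∈ T.below Y, T.equiv x w) ∧
    T.IsCC {x | x ∈ T.carrier ∧ ∀ y ∈ T.below Y, T.lt y x} ↑Y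

/-- The induced (restricted) preorder on a subset `S`. -/
def restrict (T : FinPre α) (S : Finset α) : FinPre α where
  carrier := T.carrier ∩ S
  le x y := T.le x y ∧ x ∈ S ∧ y ∈ S
  mem_of_le := by
    intro x y h
    rcases T.mem_of_le h.1 with ⟨hx, hy⟩
    exact ⟨Finset.mem_inter.2 ⟨hx, h.2.1⟩, Finset.mem_inter.2 ⟨hy, h.2.2⟩⟩
  le_refl := by
    intro x hx
    rcases Finset.mem_inter.1 hx with ⟨h1, h2⟩
    exact ⟨T.le_refl x h1, h2, h2⟩
  le_trans := by
    rintro x y z ⟨h1, hx, hy⟩ ⟨h2, _, hz⟩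
    exact ⟨T.le_trans h1 h2, hx, hz⟩

/-- The grafting `T' ↘_v T''` of `T'` above the vertex `v` of `T''` (auxiliary version,
with the disjointness hypotheses as arguments). -/
def graftAux (T' T'' : FinPre α) (v : α) (hd : Disjoint T'.carrier T''.carrier)
    (hv : v ∈ T''.carrier) : FinPre α where
  carrier := T'.carrier ∪ T''.carrier
  le x y := T'.le x y ∨ T''.le x y ∨ (T''.le x v ∧ y ∈ T'.carrier)
  mem_of_le := by
    rintro x y (h | h | ⟨h1, h2⟩)
    · rcases T'.mem_of_le h with ⟨hx, hy⟩
      exact ⟨Finset.mem_union_left _ hx, Finset.mem_union_left _ hy⟩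
    · rcases T''.mem_of_le h with ⟨hx, hy⟩
      exact ⟨Finset.mem_union_right _ hx, Finset.mem_union_right _ hy⟩
    · exact ⟨Finset.mem_union_right _ (T''.mem_of_le h1).1, Finset.mem_union_left _ h2⟩
  le_refl := by
    intro x hx
    rcases Finset.mem_union.1 hx with h | h
    · exact Or.inl (T'.le_refl x h)
    · exact Or.inr (Or.inl (T''.le_refl x h))
  le_trans := by
    rintro x y z (h1 | h1 | ⟨h1, h1'⟩) (h2 | h2 | ⟨h2, h2'⟩)
    · exact Or.inl (T'.le_trans h1 h2)
    · exact absurd (T''.mem_of_le h2).1 (Finset.disjoint_left.1 hd (T'.mem_of_le h1).2)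
    · exact absurd (T''.mem_of_le h2).1 (Finset.disjoint_left.1 hd (T'.mem_of_le h1).2)
    · exact absurd (T'.mem_of_le h2).1 (Finset.disjoint_right.1 hd (T''.mem_of_le h1).2)
    · exact Or.inr (Or.inl (T''.le_trans h1 h2))
    · exact Or.inr (Or.inr ⟨T''.le_trans h1 h2, h2'⟩)
    · exact Or.inr (Or.inr ⟨h1, (T'.mem_of_le h2).2⟩)
    · exact absurd (T''.mem_of_le h2).1 (Finset.disjoint_left.1 hd h1')
    · exact absurd (T''.mem_of_le h2).1 (Finset.disjoint_left.1 hd h1')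

/-- The grafting `T' ↘_v T''` of `T'` above the vertex `v` of `T''`: the preorder on
`X₁ ⊔ X₂` restricting to `T'` on `X₁` and to `T''` on `X₂`, with `q ≤ p` for `q ∈ X₂`,
`p ∈ X₁` iff `q ≤_{T''} v`.  (Junk value when the carriers are not disjoint or
`v ∉ T''`.) -/
noncomputable def graft (T' T'' : FinPre α) (v : α) : FinPre α :=
  if h : Disjoint T'.carrier T''.carrier ∧ v ∈ T''.carrier then
    T'.graftAux T'' v h.1 h.2 else T'

/-- The set of subsets `Y` of the carrier with `Y ◎ T`. -/
noncomputable def circSet (T : FinPre α) : Finset (Finset α) :=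
  T.carrier.powerset.filter (fun Y => T.Circ Y)

/-- Isomorphisms from `A` to `B` (bijections order-preserving in both directions),
encoded as maps `α → α` that are the identity outside of the carrier of `A`. -/
def Isos (A B : FinPre α) : Set (α → α) :=
  {f | Set.BijOn f ↑A.carrier ↑B.carrier ∧
    (∀ x ∈ A.carrier, ∀ y ∈ A.carrier, (A.le x y ↔ B.le (f x) (f y))) ∧
    ∀ x, x ∉ A.carrier → f x = x}

/-- `⟨A, B⟩`: the number of isomorphisms from `A` to `B`. -/
noncomputable def pairing (A B : FinPre α) : ℕ := Nat.card ↥(Isos A B)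

/-- The NAP coproduct `δ(T) = (1/|min(T)|) Σ_{Y ◎ T} T|_Y ⊗ T|_{X \ Y}`, with values
in the rational vector space spanned by pairs of finite preorders. -/
noncomputable def delta (T : FinPre α) : (FinPre α × FinPre α) →₀ ℚ :=
  ((T.minSet.card : ℚ))⁻¹ • ∑ Y ∈ T.circSet,
    Finsupp.single (T.restrict Y, T.restrict (T.carrier \ Y)) (1 : ℚ)

section Aux

theorem ext' {A B : FinPre α} (h1 : A.carrier = B.carrier) (h2 : A.le = B.le) : A = B := by
  cases A; cases B; cases h1; cases h2; rfl

lemma minSet_subset (T : FinPre α) : T.minSet ⊆ T.carrier := Finset.filter_subset _ _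

lemma mem_minSet {T : FinPre α} {x : α} :
    x ∈ T.minSet ↔ x ∈ T.carrier ∧ ∀ y, T.le y x → T.le x y := Finset.mem_filter

lemma minSet_nonempty (T : FinPre α) (h : T.carrier.Nonempty) : T.minSet.Nonempty := by
  obtain ⟨x, hx, hmin⟩ :=
    T.carrier.exists_min_image (fun x => (T.carrier.filter (fun y => T.le y x)).card) h
  refine ⟨x, mem_minSet.2 ⟨hx, ?_⟩⟩
  intro y hyx
  by_contra hxy
  have hy : y ∈ T.carrier := (T.mem_of_le hyx).1
  have hsub : T.carrier.filter (fun z => T.le z y) ⊂ T.carrier.filter (fun z => T.le z x) := by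
    constructor
    · intro z hz
      rcases Finset.mem_filter.1 hz with ⟨hz1, hz2⟩
      exact Finset.mem_filter.2 ⟨hz1, T.le_trans hz2 hyx⟩
    · intro hss
      have hxmem : x ∈ T.carrier.filter (fun z => T.le z x) :=
        Finset.mem_filter.2 ⟨hx, T.le_refl x hx⟩
      exact hxy (Finset.mem_filter.1 (hss hxmem)).2
  exact absurd (hmin y hy) (not_le.2 (Finset.card_lt_card hsub))

lemma mem_below {T : FinPre α} {Y : Finset α} {x : α} :
    x ∈ T.below Y ↔ (x ∈ T.carrier ∧ x ∉ Y) ∧ ∃ y ∈ Y, T.le x y := by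
  simp [below, Finset.mem_filter, Finset.mem_sdiff]

lemma mem_circSet {T : FinPre α} {Y : Finset α} :
    Y ∈ T.circSet ↔ Y ⊆ T.carrier ∧ T.Circ Y := by
  simp [circSet, Finset.mem_filter, Finset.mem_powerset]

/-- Walk a chain staying in `S` from a point of `I` when `I` is closed in `S`. -/
lemma mem_of_chain {T : FinPre α} {S I : Set α}
    (h4 : ∀ x ∈ I, ∀ y ∈ S, (T.le x y ∨ T.le y x) → y ∈ I)
    {r : α → α → Prop} (hr : ∀ a b, r a b → b ∈ S ∧ (T.le a b ∨ T.le b a))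
    {x y : α} (hx : x ∈ I) (h : Relation.ReflTransGen r x y) : y ∈ I := by
  induction h with
  | refl => exact hx
  | tail h1 h2 ih => exact h4 _ ih _ (hr _ _ h2).1 (hr _ _ h2).2

section Graft

variable (T' T'' : FinPre α) (v : α)
variable (hd : Disjoint T'.carrier T''.carrier) (hv : v ∈ T''.carrier)

lemma graft_eq : graft T' T'' v = graftAux T' T'' v hd hv := dif_pos ⟨hd, hv⟩

lemma gcarrier : (graftAux T' T'' v hd hv).carrier = T'.carrier ∪ T''.carrier := rfl

variable {T' T'' v}

lemma gle_iff {x y : α} :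
    (graftAux T' T'' v hd hv).le x y ↔
      T'.le x y ∨ T''.le x y ∨ (T''.le x v ∧ y ∈ T'.carrier) := Iff.rfl

lemma gle22 {x y : α} (hy : y ∈ T''.carrier) :
    (graftAux T' T'' v hd hv).le x y ↔ T''.le x y := by
  constructor
  · rintro (h | h | ⟨h1, h2⟩)
    · exact absurd (T'.mem_of_le h).2 (fun hh => Finset.disjoint_left.1 hd hh hy)
    · exact h
    · exact absurd h2 (fun hh => Finset.disjoint_left.1 hd hh hy)
  · exact fun h => Or.inr (Or.inl h)

lemma gle11 {x y : α} (hx : x ∈ T'.carrier) :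
    (graftAux T' T'' v hd hv).le x y ↔ T'.le x y := by
  constructor
  · rintro (h | h | ⟨h1, h2⟩)
    · exact h
    · exact absurd (T''.mem_of_le h).1 (fun hh => Finset.disjoint_left.1 hd hx hh)
    · exact absurd (T''.mem_of_le h1).1 (fun hh => Finset.disjoint_left.1 hd hx hh)
  · exact fun h => Or.inl h

lemma gle21 {x y : α} (hx : x ∈ T''.carrier) (hy : y ∈ T'.carrier) :
    (graftAux T' T'' v hd hv).le x y ↔ T''.le x v := by
  constructor
  · rintro (h | h | ⟨h1, h2⟩)
    · exact absurd (T'.mem_of_le h).1 (fun hh => Finset.disjoint_left.1 hd hh hx)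
    · exact absurd (T''.mem_of_le h).2 (fun hh => Finset.disjoint_left.1 hd hy hh)
    · exact h1
  · exact fun h => Or.inr (Or.inr ⟨h, hy⟩)

lemma glt22 {x y : α} (hx : x ∈ T''.carrier) (hy : y ∈ T''.carrier) :
    (graftAux T' T'' v hd hv).lt x y ↔ T''.lt x y := by
  unfold lt
  rw [gle22 hd hv hy, gle22 hd hv hx]

lemma glt21 {x y : α} (hx : x ∈ T''.carrier) (hy : y ∈ T'.carrier) :
    (graftAux T' T'' v hd hv).lt x y ↔ T''.le x v := by
  unfold lt
  rw [gle21 hd hv hx hy, gle11 hd hv hy]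
  constructor
  · exact fun h => h.1
  · intro h
    refine ⟨h, fun hc => ?_⟩
    exact Finset.disjoint_left.1 hd (T'.mem_of_le hc).2 hx

lemma gequiv22 {x y : α} (hx : x ∈ T''.carrier) (hy : y ∈ T''.carrier) :
    (graftAux T' T'' v hd hv).equiv x y ↔ T''.equiv x y := by
  unfold equiv
  rw [gle22 hd hv hy, gle22 hd hv hx]

lemma gminSet : (graftAux T' T'' v hd hv).minSet = T''.minSet := by
  ext x
  rw [mem_minSet, mem_minSet]
  constructor
  · rintro ⟨hxc, hP⟩
    have hx2 : x ∈ T''.carrier := by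
      rcases Finset.mem_union.1 hxc with hx1 | hx2
      · exfalso
        have hvx : (graftAux T' T'' v hd hv).le v x := Or.inr (Or.inr ⟨T''.le_refl v hv, hx1⟩)
        have := hP v hvx
        rcases this with h | h | ⟨h1, h2⟩
        · exact Finset.disjoint_left.1 hd (T'.mem_of_le h).2 hv
        · exact Finset.disjoint_left.1 hd hx1 (T''.mem_of_le h).1
        · exact Finset.disjoint_left.1 hd hx1 (T''.mem_of_le h1).1
      · exact hx2
    refine ⟨hx2, fun y hyx => ?_⟩
    have hy2 : y ∈ T''.carrier := (T''.mem_of_le hyx).1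
    exact (gle22 hd hv hy2).1 (hP y (Or.inr (Or.inl hyx)))
  · rintro ⟨hx2, hP⟩
    refine ⟨Finset.mem_union_right _ hx2, fun y hyx => ?_⟩
    rcases hyx with h | h | ⟨h1, h2⟩
    · exact absurd hx2 (fun hh => Finset.disjoint_left.1 hd (T'.mem_of_le h).2 hh)
    · exact Or.inr (Or.inl (hP y h))
    · exact absurd hx2 (fun hh => Finset.disjoint_left.1 hd h2 hh)

lemma gbelow_sub {Y : Finset α} (hY : Y ⊆ T''.carrier) :
    (graftAux T' T'' v hd hv).below Y = T''.below Y := by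
  ext x
  rw [mem_below, mem_below, gcarrier]
  constructor
  · rintro ⟨⟨hxc, hxY⟩, y, hyY, hle⟩
    have h2 : T''.le x y := (gle22 hd hv (hY hyY)).1 hle
    exact ⟨⟨(T''.mem_of_le h2).1, hxY⟩, y, hyY, h2⟩
  · rintro ⟨⟨hxc, hxY⟩, y, hyY, hle⟩
    exact ⟨⟨Finset.mem_union_right _ hxc, hxY⟩, y, hyY, Or.inr (Or.inl hle)⟩

lemma gbelow_union {Y : Finset α} (hY : Y ⊆ T''.carrier) (hvY : v ∈ Y) :
    (graftAux T' T'' v hd hv).below (Y ∪ T'.carrier) = T''.below Y := by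
  ext x
  rw [mem_below, mem_below, gcarrier]
  constructor
  · rintro ⟨⟨hxc, hxY⟩, y, hyY, hle⟩
    have hx1 : x ∉ T'.carrier := fun h => hxY (Finset.mem_union_right _ h)
    have hx2 : x ∈ T''.carrier := by
      rcases Finset.mem_union.1 hxc with h | h
      · exact absurd h hx1
      · exact h
    refine ⟨⟨hx2, fun h => hxY (Finset.mem_union_left _ h)⟩, ?_⟩
    rcases Finset.mem_union.1 hyY with hy | hy
    · exact ⟨y, hy, (gle22 hd hv (hY hy)).1 hle⟩
    · exact ⟨v, hvY, (gle21 hd hv hx2 hy).1 hle⟩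
  · rintro ⟨⟨hxc, hxY⟩, y, hyY, hle⟩
    have hx1 : x ∉ T'.carrier := fun h => Finset.disjoint_left.1 hd h hxc
    refine ⟨⟨Finset.mem_union_right _ hxc, ?_⟩, y, Finset.mem_union_left _ hyY,
      Or.inr (Or.inl hle)⟩
    intro h
    rcases Finset.mem_union.1 h with h | h
    · exact hxY h
    · exact hx1 h

lemma gbelow_X₁ (hne : T'.carrier.Nonempty) :
    (graftAux T' T'' v hd hv).below T'.carrier = T''.carrier.filter (fun x => T''.le x v) := by
  ext x
  rw [mem_below, gcarrier, Finset.mem_filter]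
  constructor
  · rintro ⟨⟨hxc, hxY⟩, y, hyY, hle⟩
    have hx2 : x ∈ T''.carrier := by
      rcases Finset.mem_union.1 hxc with h | h
      · exact absurd h hxY
      · exact h
    exact ⟨hx2, (gle21 hd hv hx2 hyY).1 hle⟩
  · rintro ⟨hx2, hle⟩
    obtain ⟨p, hp⟩ := hne
    exact ⟨⟨Finset.mem_union_right _ hx2, fun h => Finset.disjoint_left.1 hd h hx2⟩,
      p, hp, Or.inr (Or.inr ⟨hle, hp⟩)⟩

local notation "G" => graftAux T' T'' v hd hv

lemma gsymm {I : Set α} :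
    Symmetric (fun a b => a ∈ I ∧ b ∈ I ∧ ((G).le a b ∨ (G).le b a)) :=
  fun _ _ h => ⟨h.2.1, h.1, h.2.2.symm⟩

/-- If a chain inside an upper set `Z` joins a point of `X₂` to a point of `X₁`,
then `v ∈ Z`. -/
lemma cross_v_mem {Z : Finset α}
    (hup : ∀ x ∈ Z, ∀ z, (G).le x z → z ∈ Z)
    (hZs : Z ⊆ (G).carrier) {p : α} (hp : p ∈ T'.carrier) :
    ∀ x, Relation.ReflTransGen
      (fun a b => a ∈ (↑Z : Set α) ∧ b ∈ ↑Z ∧ ((G).le a b ∨ (G).le b a)) x p →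
      x ∈ T''.carrier → x ∈ Z → v ∈ Z := by
  intro x h
  induction h using Relation.ReflTransGen.head_induction_on with
  | refl =>
    intro h2 _
    exact absurd hp (fun hh => Finset.disjoint_left.1 hd hh h2)
  | @head a b hab hbp ih =>
    intro ha2 haZ
    obtain ⟨_, hbZ, hcomp⟩ := hab
    have hbZ' : b ∈ Z := hbZ
    by_cases hb2 : b ∈ T''.carrier
    · exact ih hb2 hbZ'
    · have hb1 : b ∈ T'.carrier := by
        rcases Finset.mem_union.1 (hZs hbZ') with h | h
        · exact h
        · exact absurd h hb2
      rcases hcomp with h | h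
      · have hav : T''.le a v := (gle21 hd hv ha2 hb1).1 h
        exact hup a haZ v (Or.inr (Or.inl hav))
      · exact absurd ((gle11 hd hv hb1).1 h) (fun hh =>
          Finset.disjoint_left.1 hd (T'.mem_of_le hh).2 ha2)

/-- Contract `X₁` to `v`: chains in `Y ∪ X₁` give chains in `Y` (for `T''`). -/
lemma conn_shrink {Y : Finset α} (hYs : Y ⊆ T''.carrier) (hvY : v ∈ Y)
    {x y : α}
    (h : Relation.ReflTransGen
      (fun a b => a ∈ (↑(Y ∪ T'.carrier) : Set α) ∧ b ∈ ↑(Y ∪ T'.carrier) ∧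
        ((G).le a b ∨ (G).le b a)) x y) :
    Relation.ReflTransGen
      (fun a b => a ∈ (↑Y : Set α) ∧ b ∈ ↑Y ∧ (T''.le a b ∨ T''.le b a))
      (if x ∈ T'.carrier then v else x) (if y ∈ T'.carrier then v else y) := by
  induction h with
  | refl => exact .refl
  | @tail b c h1 h2 ih =>
    obtain ⟨hbZ, hcZ, hcomp⟩ := h2
    have hbZ' : b ∈ Y ∪ T'.carrier := hbZ
    have hcZ' : c ∈ Y ∪ T'.carrier := hcZ
    by_cases hb1 : b ∈ T'.carrier <;> by_cases hc1 : c ∈ T'.carrier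
    · simp only [if_pos hb1] at ih
      simpa [if_pos hc1] using ih
    · have hcY : c ∈ Y := by
        rcases Finset.mem_union.1 hcZ' with h | h
        · exact h
        · exact absurd h hc1
      simp only [if_pos hb1] at ih
      rw [if_neg hc1]
      refine ih.tail ⟨Finset.mem_coe.2 hvY, Finset.mem_coe.2 hcY, ?_⟩
      rcases hcomp with h | h
      · exact absurd ((gle11 hd hv hb1).1 h) (fun hh =>
          Finset.disjoint_left.1 hd (T'.mem_of_le hh).2 (hYs hcY))
      · exact Or.inr ((gle21 hd hv (hYs hcY) hb1).1 h)
    · have hbY : b ∈ Y := by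
        rcases Finset.mem_union.1 hbZ' with h | h
        · exact h
        · exact absurd h hb1
      simp only [if_neg hb1] at ih
      rw [if_pos hc1]
      refine ih.tail ⟨Finset.mem_coe.2 hbY, Finset.mem_coe.2 hvY, ?_⟩
      rcases hcomp with h | h
      · exact Or.inl ((gle21 hd hv (hYs hbY) hc1).1 h)
      · exact absurd ((gle11 hd hv hc1).1 h) (fun hh =>
          Finset.disjoint_left.1 hd (T'.mem_of_le hh).2 (hYs hbY))
    · have hbY : b ∈ Y := by
        rcases Finset.mem_union.1 hbZ' with h | h
        · exact h
        · exact absurd h hb1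
      have hcY : c ∈ Y := by
        rcases Finset.mem_union.1 hcZ' with h | h
        · exact h
        · exact absurd h hc1
      simp only [if_neg hb1] at ih
      rw [if_neg hc1]
      refine ih.tail ⟨Finset.mem_coe.2 hbY, Finset.mem_coe.2 hcY, ?_⟩
      rcases hcomp with h | h
      · exact Or.inl ((gle22 hd hv (hYs hcY)).1 h)
      · exact Or.inr ((gle22 hd hv (hYs hbY)).1 h)

/-- Claim A: if `Y ◎ T''` and `v ∈ Y` then `(Y ∪ X₁) ◎ (T' ↘_v T'')`. -/
lemma circ_union (hT' : T'.Connected) {Y : Finset α} (hYs : Y ⊆ T''.carrier)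
    (hvY : v ∈ Y) (hY : T''.Circ Y) : (G).Circ (Y ∪ T'.carrier) := by
  obtain ⟨hup, w, hwB, hwmin, hequiv, hcc⟩ := hY
  have hBeq : (G).below (Y ∪ T'.carrier) = T''.below Y := gbelow_union hd hv hYs hvY
  have hBsub : ∀ x ∈ T''.below Y, x ∈ T''.carrier := fun x hx => (mem_below.1 hx).1.1
  have hYlev : ∀ y ∈ T''.below Y, T''.le y v := by
    intro y hy
    have hvS : v ∈ {x | x ∈ T''.carrier ∧ ∀ y ∈ T''.below Y, T''.lt y x} :=
      hcc.2.1 (Finset.mem_coe.2 hvY)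
    exact (hvS.2 y hy).1
  refine ⟨?_, w, ?_, ?_, ?_, ?_⟩
  · -- upper set
    intro x hx z hz
    rcases Finset.mem_union.1 hx with hx | hx
    · rcases hz with h | h | ⟨h1, h2⟩
      · exact absurd (T'.mem_of_le h).1 (fun hh => Finset.disjoint_left.1 hd hh (hYs hx))
      · exact Finset.mem_union_left _ (hup x hx z h)
      · exact Finset.mem_union_right _ h2
    · exact Finset.mem_union_right _ (T'.mem_of_le ((gle11 hd hv hx).1 hz)).2
  · rw [hBeq]; exact hwB
  · rw [gminSet hd hv]; exact hwmin
  · rw [hBeq]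
    intro x hx
    exact (gequiv22 hd hv (hBsub x hx) (hBsub w hwB)).2 (hequiv x hx)
  · rw [hBeq]
    -- IsCC
    have hX1S : ∀ p ∈ T'.carrier,
        p ∈ {x | x ∈ (G).carrier ∧ ∀ y ∈ T''.below Y, (G).lt y x} := by
      intro p hp
      exact ⟨Finset.mem_union_left _ hp, fun y hy =>
        (glt21 hd hv (hBsub y hy) hp).2 (hYlev y hy)⟩
    have hX2S : ∀ x ∈ {x | x ∈ T''.carrier ∧ ∀ y ∈ T''.below Y, T''.lt y x},
        x ∈ {x | x ∈ (G).carrier ∧ ∀ y ∈ T''.below Y, (G).lt y x} := by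
      intro x hx
      exact ⟨Finset.mem_union_right _ hx.1, fun y hy =>
        (glt22 hd hv (hBsub y hy) hx.1).2 (hx.2 y hy)⟩
    have hSX2 : ∀ x ∈ {x | x ∈ (G).carrier ∧ ∀ y ∈ T''.below Y, (G).lt y x},
        x ∈ T''.carrier → x ∈ {x | x ∈ T''.carrier ∧ ∀ y ∈ T''.below Y, T''.lt y x} := by
      intro x hx hx2
      exact ⟨hx2, fun y hy => (glt22 hd hv (hBsub y hy) hx2).1 (hx.2 y hy)⟩
    have hIS : (↑(Y ∪ T'.carrier) : Set α) ⊆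
        {x | x ∈ (G).carrier ∧ ∀ y ∈ T''.below Y, (G).lt y x} := by
      intro x hx
      rcases Finset.mem_union.1 (Finset.mem_coe.1 hx) with hx | hx
      · exact hX2S x (hcc.2.1 (Finset.mem_coe.2 hx))
      · exact hX1S x hx
    refine ⟨⟨v, Finset.mem_coe.2 (Finset.mem_union_left _ hvY)⟩, hIS, ?_, ?_⟩
    · -- connectivity
      have hedge : ∀ p ∈ T'.carrier, Relation.ReflTransGen
          (fun a b => a ∈ (↑(Y ∪ T'.carrier) : Set α) ∧ b ∈ ↑(Y ∪ T'.carrier) ∧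
            ((G).le a b ∨ (G).le b a)) v p := by
        intro p hp
        exact Relation.ReflTransGen.single
          ⟨Finset.mem_coe.2 (Finset.mem_union_left _ hvY),
           Finset.mem_coe.2 (Finset.mem_union_right _ hp),
           Or.inl ((gle21 hd hv hv hp).2 (T''.le_refl v hv))⟩
      have hpathY : ∀ x ∈ Y, ∀ y ∈ Y, Relation.ReflTransGen
          (fun a b => a ∈ (↑(Y ∪ T'.carrier) : Set α) ∧ b ∈ ↑(Y ∪ T'.carrier) ∧
            ((G).le a b ∨ (G).le b a)) x y := by
        intro x hx y hy
        refine Relation.ReflTransGen.mono ?_ _ _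
          (hcc.2.2.1 x (Finset.mem_coe.2 hx) y (Finset.mem_coe.2 hy))
        rintro a b ⟨ha, hb, hc⟩
        exact ⟨Finset.mem_coe.2 (Finset.mem_union_left _ (Finset.mem_coe.1 ha)),
          Finset.mem_coe.2 (Finset.mem_union_left _ (Finset.mem_coe.1 hb)),
          hc.imp (fun h => Or.inr (Or.inl h)) (fun h => Or.inr (Or.inl h))⟩
      have hpath1 : ∀ x ∈ T'.carrier, ∀ y ∈ T'.carrier, Relation.ReflTransGen
          (fun a b => a ∈ (↑(Y ∪ T'.carrier) : Set α) ∧ b ∈ ↑(Y ∪ T'.carrier) ∧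
            ((G).le a b ∨ (G).le b a)) x y := by
        intro x hx y hy
        refine Relation.ReflTransGen.mono ?_ _ _
          (hT'.2 x (Finset.mem_coe.2 hx) y (Finset.mem_coe.2 hy))
        rintro a b ⟨ha, hb, hc⟩
        exact ⟨Finset.mem_coe.2 (Finset.mem_union_right _ (Finset.mem_coe.1 ha)),
          Finset.mem_coe.2 (Finset.mem_union_right _ (Finset.mem_coe.1 hb)),
          hc.imp Or.inl Or.inl⟩
      intro x hx y hy
      rcases Finset.mem_union.1 (Finset.mem_coe.1 hx) with hx' | hx' <;>
        rcases Finset.mem_union.1 (Finset.mem_coe.1 hy) with hy' | hy'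
      · exact hpathY x hx' y hy'
      · exact (hpathY x hx' v hvY).trans (hedge y hy')
      · exact (@Relation.ReflTransGen.stdSymm _ _ ⟨fun _ _ h => gsymm hd hv h⟩).symm _ _
          ((hpathY y hy' v hvY).trans (hedge x hx'))
      · exact hpath1 x hx' y hy'
    · -- closure
      intro x hx y hy hcomp
      have hyc : y ∈ T'.carrier ∪ T''.carrier := hy.1
      rcases Finset.mem_union.1 hyc with hy1 | hy2
      · exact Finset.mem_coe.2 (Finset.mem_union_right _ hy1)
      · have hyS'' : y ∈ {x | x ∈ T''.carrier ∧ ∀ y ∈ T''.below Y, T''.lt y x} :=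
          hSX2 y hy hy2
        rcases Finset.mem_union.1 (Finset.mem_coe.1 hx) with hx' | hx'
        · have : T''.le x y ∨ T''.le y x := by
            rcases hcomp with h | h
            · exact Or.inl ((gle22 hd hv hy2).1 h)
            · exact Or.inr ((gle22 hd hv (hYs hx')).1 h)
          exact Finset.mem_coe.2 (Finset.mem_union_left _
            (Finset.mem_coe.1 (hcc.2.2.2 x (Finset.mem_coe.2 hx') y hyS'' this)))
        · -- x ∈ X₁
          have hyv : T''.le y v := by
            rcases hcomp with h | h
            · exact absurd ((gle11 hd hv hx').1 h) (fun hh =>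
                Finset.disjoint_left.1 hd (T'.mem_of_le hh).2 hy2)
            · exact (gle21 hd hv hy2 hx').1 h
          exact Finset.mem_coe.2 (Finset.mem_union_left _
            (Finset.mem_coe.1 (hcc.2.2.2 v (Finset.mem_coe.2 hvY) y hyS'' (Or.inr hyv))))

/-- Claim B: if `Y ◎ T''` and `v ∉ Y` then `Y ◎ (T' ↘_v T'')`. -/
lemma circ_sub {Y : Finset α} (hYs : Y ⊆ T''.carrier)
    (hvY : v ∉ Y) (hY : T''.Circ Y) : (G).Circ Y := by
  obtain ⟨hup, w, hwB, hwmin, hequiv, hcc⟩ := hY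
  have hBeq : (G).below Y = T''.below Y := gbelow_sub hd hv hYs
  have hBsub : ∀ x ∈ T''.below Y, x ∈ T''.carrier := fun x hx => (mem_below.1 hx).1.1
  refine ⟨?_, w, ?_, ?_, ?_, ?_⟩
  · intro x hx z hz
    rcases hz with h | h | ⟨h1, h2⟩
    · exact absurd (T'.mem_of_le h).1 (fun hh => Finset.disjoint_left.1 hd hh (hYs hx))
    · exact hup x hx z h
    · exact absurd (hup x hx v h1) hvY
  · rw [hBeq]; exact hwB
  · rw [gminSet hd hv]; exact hwmin
  · rw [hBeq]
    intro x hx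
    exact (gequiv22 hd hv (hBsub x hx) (hBsub w hwB)).2 (hequiv x hx)
  · rw [hBeq]
    have hX2S : ∀ x ∈ {x | x ∈ T''.carrier ∧ ∀ y ∈ T''.below Y, T''.lt y x},
        x ∈ {x | x ∈ (G).carrier ∧ ∀ y ∈ T''.below Y, (G).lt y x} := by
      intro x hx
      exact ⟨Finset.mem_union_right _ hx.1, fun y hy =>
        (glt22 hd hv (hBsub y hy) hx.1).2 (hx.2 y hy)⟩
    refine ⟨hcc.1, fun x hx => hX2S x (hcc.2.1 hx), ?_, ?_⟩
    · intro x hx y hy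
      refine Relation.ReflTransGen.mono ?_ _ _ (hcc.2.2.1 x hx y hy)
      rintro a b ⟨ha, hb, hc⟩
      exact ⟨ha, hb, hc.imp (fun h => Or.inr (Or.inl h)) (fun h => Or.inr (Or.inl h))⟩
    · intro x hx y hy hcomp
      have hx2 : x ∈ T''.carrier := hYs (Finset.mem_coe.1 hx)
      have hyc : y ∈ T'.carrier ∪ T''.carrier := hy.1
      rcases Finset.mem_union.1 hyc with hy1 | hy2
      · exfalso
        rcases hcomp with h | h
        · exact hvY (hup x (Finset.mem_coe.1 hx) v ((gle21 hd hv hx2 hy1).1 h))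
        · exact Finset.disjoint_left.1 hd (T'.mem_of_le ((gle11 hd hv hy1).1 h)).2 hx2
      · have hyS'' : y ∈ {x | x ∈ T''.carrier ∧ ∀ y ∈ T''.below Y, T''.lt y x} :=
          ⟨hy2, fun z hz => (glt22 hd hv (hBsub z hz) hy2).1 (hy.2 z hz)⟩
        have : T''.le x y ∨ T''.le y x := by
          rcases hcomp with h | h
          · exact Or.inl ((gle22 hd hv hy2).1 h)
          · exact Or.inr ((gle22 hd hv hx2).1 h)
        exact hcc.2.2.2 x hx y hyS'' this

/-- Claim C: if `v` is minimal in `T''` then `X₁ ◎ (T' ↘_v T'')`. -/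
lemma circ_X₁ (hT' : T'.Connected) (hm : v ∈ T''.minSet) : (G).Circ T'.carrier := by
  have hBeq : (G).below T'.carrier = T''.carrier.filter (fun x => T''.le x v) :=
    gbelow_X₁ hd hv hT'.1
  have hBsub : ∀ x ∈ T''.carrier.filter (fun x => T''.le x v), x ∈ T''.carrier ∧ T''.le x v :=
    fun x hx => Finset.mem_filter.1 hx
  refine ⟨?_, v, ?_, ?_, ?_, ?_⟩
  · intro x hx z hz
    exact (T'.mem_of_le ((gle11 hd hv hx).1 hz)).2
  · rw [hBeq]
    exact Finset.mem_filter.2 ⟨hv, T''.le_refl v hv⟩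
  · rw [gminSet hd hv]; exact hm
  · rw [hBeq]
    intro x hx
    obtain ⟨hx2, hxv⟩ := hBsub x hx
    exact ⟨Or.inr (Or.inl hxv), Or.inr (Or.inl ((mem_minSet.1 hm).2 x hxv))⟩
  · rw [hBeq]
    have hX1S : ∀ p ∈ T'.carrier,
        p ∈ {x | x ∈ (G).carrier ∧
          ∀ y ∈ T''.carrier.filter (fun x => T''.le x v), (G).lt y x} := by
      intro p hp
      exact ⟨Finset.mem_union_left _ hp, fun y hy =>
        (glt21 hd hv (hBsub y hy).1 hp).2 (hBsub y hy).2⟩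
    refine ⟨⟨hT'.1.choose, Finset.mem_coe.2 hT'.1.choose_spec⟩,
      fun x hx => hX1S x (Finset.mem_coe.1 hx), ?_, ?_⟩
    · intro x hx y hy
      refine Relation.ReflTransGen.mono ?_ _ _ (hT'.2 x hx y hy)
      rintro a b ⟨ha, hb, hc⟩
      exact ⟨ha, hb, hc.imp Or.inl Or.inl⟩
    · intro x hx y hy hcomp
      have hx1 : x ∈ T'.carrier := Finset.mem_coe.1 hx
      have hyc : y ∈ T'.carrier ∪ T''.carrier := hy.1
      rcases Finset.mem_union.1 hyc with hy1 | hy2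
      · exact Finset.mem_coe.2 hy1
      · exfalso
        have hyv : T''.le y v := by
          rcases hcomp with h | h
          · exact absurd ((gle11 hd hv hx1).1 h) (fun hh =>
              Finset.disjoint_left.1 hd (T'.mem_of_le hh).2 hy2)
          · exact (gle21 hd hv hy2 hx1).1 h
        have hyB : y ∈ T''.carrier.filter (fun x => T''.le x v) :=
          Finset.mem_filter.2 ⟨hy2, hyv⟩
        exact (hy.2 y hyB).2 (hy.2 y hyB).1

/-- Claim D: every `Z ◎ (T' ↘_v T'')` has one of the three expected shapes. -/
lemma circ_inv (hT' : T'.Connected) {Z : Finset α}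
    (hZs : Z ⊆ (G).carrier) (hZ : (G).Circ Z) :
    (Z = T'.carrier ∧ v ∈ T''.minSet) ∨
      ∃ Y, Y ⊆ T''.carrier ∧ T''.Circ Y ∧
        ((v ∈ Y ∧ Z = Y ∪ T'.carrier) ∨ (v ∉ Y ∧ Z = Y)) := by
  obtain ⟨hup, w, hwB, hwmin, hequiv, hcc⟩ := hZ
  rw [gminSet hd hv] at hwmin
  have hw2 : w ∈ T''.carrier := T''.minSet_subset hwmin
  have hBsub : ∀ x ∈ (G).below Z, x ∈ T''.carrier := fun x hx =>
    (T''.mem_of_le ((gle22 hd hv hw2).1 (hequiv x hx).1)).1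
  have hBequiv : ∀ x ∈ (G).below Z, T''.equiv x w := fun x hx =>
    (gequiv22 hd hv (hBsub x hx) hw2).1 (hequiv x hx)
  by_cases hZ1 : ∃ p ∈ Z, p ∈ T'.carrier
  · -- Z meets X₁
    obtain ⟨p, hpZ, hp1⟩ := hZ1
    have c0 : ∀ y ∈ (G).below Z, T''.le y v := by
      intro y hy
      have hpS := hcc.2.1 (Finset.mem_coe.2 hpZ)
      exact (glt21 hd hv (hBsub y hy) hp1).1 (hpS.2 y hy)
    have hX1S : ∀ q ∈ T'.carrier,
        q ∈ {x | x ∈ (G).carrier ∧ ∀ y ∈ (G).below Z, (G).lt y x} := fun q hq =>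
      ⟨Finset.mem_union_left _ hq, fun y hy =>
        (glt21 hd hv (hBsub y hy) hq).2 (c0 y hy)⟩
    have hX1Z : T'.carrier ⊆ Z := by
      intro q hq
      have := mem_of_chain (T := G) hcc.2.2.2
        (r := fun a b => a ∈ (↑T'.carrier : Set α) ∧ b ∈ ↑T'.carrier ∧
          (T'.le a b ∨ T'.le b a))
        (fun a b hab => ⟨hX1S b (Finset.mem_coe.1 hab.2.1), hab.2.2.imp Or.inl Or.inl⟩)
        (Finset.mem_coe.2 hpZ) (hT'.2 p (Finset.mem_coe.2 hp1) q (Finset.mem_coe.2 hq))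
      exact Finset.mem_coe.1 this
    set Y := Z ∩ T''.carrier with hYdef
    have hYs : Y ⊆ T''.carrier := Finset.inter_subset_right
    have hZeq : Z = Y ∪ T'.carrier := by
      ext a
      constructor
      · intro ha
        rcases Finset.mem_union.1 (hZs ha) with h | h
        · exact Finset.mem_union_right _ h
        · exact Finset.mem_union_left _ (Finset.mem_inter.2 ⟨ha, h⟩)
      · intro ha
        rcases Finset.mem_union.1 ha with h | h
        · exact (Finset.mem_inter.1 h).1
        · exact hX1Z h
    rcases Finset.eq_empty_or_nonempty Y with hYe | hYne
    · -- Z = X₁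
      left
      have hZX : Z = T'.carrier := by rw [hZeq, hYe, Finset.empty_union]
      have hBeq : (G).below Z = T''.carrier.filter (fun x => T''.le x v) := by
        rw [hZX]; exact gbelow_X₁ hd hv hT'.1
      have hvB : v ∈ (G).below Z := by
        rw [hBeq]; exact Finset.mem_filter.2 ⟨hv, T''.le_refl v hv⟩
      obtain ⟨hvw, hwv⟩ := hBequiv v hvB
      refine ⟨hZX, mem_minSet.2 ⟨hv, fun y hyv => ?_⟩⟩
      exact T''.le_trans hvw ((mem_minSet.1 hwmin).2 y (T''.le_trans hyv hvw))
    · -- Z = Y ∪ X₁ with v ∈ Y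
      right
      obtain ⟨y0, hy0⟩ := hYne
      have hy0Z : y0 ∈ Z := (Finset.mem_inter.1 hy0).1
      have hy02 : y0 ∈ T''.carrier := (Finset.mem_inter.1 hy0).2
      have hvZ : v ∈ Z :=
        cross_v_mem hd hv hup hZs hp1 y0
          (hcc.2.2.1 y0 (Finset.mem_coe.2 hy0Z) p (Finset.mem_coe.2 hpZ)) hy02 hy0Z
      have hvY : v ∈ Y := Finset.mem_inter.2 ⟨hvZ, hv⟩
      have hBeq : (G).below Z = T''.below Y := by
        rw [hZeq]; exact gbelow_union hd hv hYs hvY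
      rw [hBeq] at hwB hcc c0 hBsub hBequiv
      refine ⟨Y, hYs, ⟨?_, w, hwB, hwmin, hBequiv, ?_⟩, Or.inl ⟨hvY, hZeq⟩⟩
      · -- upper for T''
        intro x hx z hz
        have hzZ : z ∈ Z := hup x (Finset.mem_inter.1 hx).1 z (Or.inr (Or.inl hz))
        exact Finset.mem_inter.2 ⟨hzZ, (T''.mem_of_le hz).2⟩
      · -- IsCC for T''
        have hB2 : ∀ y ∈ T''.below Y, y ∈ T''.carrier := hBsub
        have hS''S : ∀ x ∈ {x | x ∈ T''.carrier ∧ ∀ y ∈ T''.below Y, T''.lt y x},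
            x ∈ {x | x ∈ (G).carrier ∧ ∀ y ∈ T''.below Y, (G).lt y x} := fun x hx =>
          ⟨Finset.mem_union_right _ hx.1, fun y hy =>
            (glt22 hd hv (hB2 y hy) hx.1).2 (hx.2 y hy)⟩
        refine ⟨⟨y0, Finset.mem_coe.2 hy0⟩, ?_, ?_, ?_⟩
        · intro x hx
          have hx2 : x ∈ T''.carrier := hYs (Finset.mem_coe.1 hx)
          have hxS := hcc.2.1 (Finset.mem_coe.2 (by
            rw [hZeq]; exact Finset.mem_union_left _ (Finset.mem_coe.1 hx)))
          exact ⟨hx2, fun y hy => (glt22 hd hv (hB2 y hy) hx2).1 (hxS.2 y hy)⟩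
        · -- connectivity via contraction
          intro x hx y hy
          have hxY : x ∈ Y := Finset.mem_coe.1 hx
          have hyY : y ∈ Y := Finset.mem_coe.1 hy
          have hpath := hcc.2.2.1 x (Finset.mem_coe.2 (by
              rw [hZeq]; exact Finset.mem_union_left _ hxY))
            y (Finset.mem_coe.2 (by rw [hZeq]; exact Finset.mem_union_left _ hyY))
          rw [hZeq] at hpath
          have := conn_shrink hd hv hYs hvY hpath
          have hx1 : x ∉ T'.carrier := fun hh => Finset.disjoint_left.1 hd hh (hYs hxY)
          have hy1 : y ∉ T'.carrier := fun hh => Finset.disjoint_left.1 hd hh (hYs hyY)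
          rwa [if_neg hx1, if_neg hy1] at this
        · -- closure
          intro x hx y hy hcomp
          have hzZ : y ∈ (↑Z : Set α) := by
            have := hcc.2.2.2 x (Finset.mem_coe.2 (by
              rw [hZeq]; exact Finset.mem_union_left _ (Finset.mem_coe.1 hx)))
              y (hS''S y hy)
              (hcomp.imp (fun h => Or.inr (Or.inl h)) (fun h => Or.inr (Or.inl h)))
            exact this
          exact Finset.mem_coe.2 (Finset.mem_inter.2 ⟨Finset.mem_coe.1 hzZ, hy.1⟩)
  · -- Z ⊆ X₂
    right
    push_neg at hZ1
    have hZsub2 : Z ⊆ T''.carrier := by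
      intro x hx
      rcases Finset.mem_union.1 (hZs hx) with h | h
      · exact absurd h (hZ1 x hx)
      · exact h
    have hvZ : v ∉ Z := by
      intro hvZ
      obtain ⟨p, hp⟩ := hT'.1
      exact hZ1 p (hup v hvZ p (Or.inr (Or.inr ⟨T''.le_refl v hv, hp⟩))) hp
    have hBeq : (G).below Z = T''.below Z := gbelow_sub hd hv hZsub2
    rw [hBeq] at hwB hcc hBsub hBequiv
    refine ⟨Z, hZsub2, ⟨?_, w, hwB, hwmin, hBequiv, ?_⟩, Or.inr ⟨hvZ, rfl⟩⟩
    · exact fun x hx z hz => hup x hx z (Or.inr (Or.inl hz))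
    · have hB2 : ∀ y ∈ T''.below Z, y ∈ T''.carrier := hBsub
      have hS''S : ∀ x ∈ {x | x ∈ T''.carrier ∧ ∀ y ∈ T''.below Z, T''.lt y x},
          x ∈ {x | x ∈ (G).carrier ∧ ∀ y ∈ T''.below Z, (G).lt y x} := fun x hx =>
        ⟨Finset.mem_union_right _ hx.1, fun y hy =>
          (glt22 hd hv (hB2 y hy) hx.1).2 (hx.2 y hy)⟩
      refine ⟨hcc.1, ?_, ?_, ?_⟩
      · intro x hx
        have hx2 : x ∈ T''.carrier := hZsub2 (Finset.mem_coe.1 hx)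
        have hxS := hcc.2.1 hx
        exact ⟨hx2, fun y hy => (glt22 hd hv (hB2 y hy) hx2).1 (hxS.2 y hy)⟩
      · intro x hx y hy
        refine Relation.ReflTransGen.mono ?_ _ _ (hcc.2.2.1 x hx y hy)
        rintro a b ⟨ha, hb, hc⟩
        have ha2 : a ∈ T''.carrier := hZsub2 (Finset.mem_coe.1 ha)
        have hb2 : b ∈ T''.carrier := hZsub2 (Finset.mem_coe.1 hb)
        exact ⟨ha, hb, hc.imp (fun h => (gle22 hd hv hb2).1 h)
          (fun h => (gle22 hd hv ha2).1 h)⟩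
      · intro x hx y hy hcomp
        exact hcc.2.2.2 x hx y (hS''S y hy)
          (hcomp.imp (fun h => Or.inr (Or.inl h)) (fun h => Or.inr (Or.inl h)))

lemma circ_nonempty {T : FinPre α} {Y : Finset α} (h : T.Circ Y) : Y.Nonempty := by
  obtain ⟨-, w, -, -, -, hcc⟩ := h
  obtain ⟨x, hx⟩ := hcc.1
  exact ⟨x, Finset.mem_coe.1 hx⟩

include hd in
lemma graft_inj (hT'ne : T'.carrier.Nonempty) :
    ∀ Y₁ ∈ T''.circSet, ∀ Y₂ ∈ T''.circSet,
      (if v ∈ Y₁ then Y₁ ∪ T'.carrier else Y₁) = (if v ∈ Y₂ then Y₂ ∪ T'.carrier else Y₂) →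
      Y₁ = Y₂ := by
  intro Y₁ h₁ Y₂ h₂ heq
  obtain ⟨h₁s, h₁c⟩ := mem_circSet.1 h₁
  obtain ⟨h₂s, h₂c⟩ := mem_circSet.1 h₂
  obtain ⟨p, hp⟩ := hT'ne
  by_cases hv1 : v ∈ Y₁ <;> by_cases hv2 : v ∈ Y₂
  · rw [if_pos hv1, if_pos hv2] at heq
    ext a
    constructor
    · intro ha
      have : a ∈ Y₂ ∪ T'.carrier := heq ▸ Finset.mem_union_left _ ha
      rcases Finset.mem_union.1 this with h | h
      · exact h
      · exact absurd h (fun hh => Finset.disjoint_left.1 hd hh (h₁s ha))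
    · intro ha
      have : a ∈ Y₁ ∪ T'.carrier := heq ▸ Finset.mem_union_left _ ha
      rcases Finset.mem_union.1 this with h | h
      · exact h
      · exact absurd h (fun hh => Finset.disjoint_left.1 hd hh (h₂s ha))
  · rw [if_pos hv1, if_neg hv2] at heq
    exact absurd (h₂s (heq ▸ Finset.mem_union_right _ hp))
      (fun hh => Finset.disjoint_left.1 hd hp hh)
  · rw [if_neg hv1, if_pos hv2] at heq
    exact absurd (h₁s (heq.symm ▸ Finset.mem_union_right _ hp))
      (fun hh => Finset.disjoint_left.1 hd hp hh)
  · rw [if_neg hv1, if_neg hv2] at heq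
    exact heq

lemma circSet_graft (hT' : T'.Connected) :
    (G).circSet =
      (T''.circSet.image (fun Y => if v ∈ Y then Y ∪ T'.carrier else Y)) ∪
        (if v ∈ T''.minSet then {T'.carrier} else ∅) := by
  ext Z
  rw [Finset.mem_union, Finset.mem_image, mem_circSet]
  constructor
  · rintro ⟨hZs, hZc⟩
    rcases circ_inv hd hv hT' hZs hZc with ⟨hZX, hm⟩ | ⟨Y, hYs, hYc, hcase⟩
    · right
      rw [if_pos hm]
      simp [hZX]
    · left
      refine ⟨Y, mem_circSet.2 ⟨hYs, hYc⟩, ?_⟩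
      rcases hcase with ⟨hvY, hZeq⟩ | ⟨hvY, hZeq⟩
      · rw [if_pos hvY, hZeq]
      · rw [if_neg hvY, hZeq]
  · rintro (⟨Y, hY, hfY⟩ | hZm)
    · obtain ⟨hYs, hYc⟩ := mem_circSet.1 hY
      by_cases hvY : v ∈ Y
      · rw [if_pos hvY] at hfY
        subst hfY
        refine ⟨?_, circ_union hd hv hT' hYs hvY hYc⟩
        exact Finset.union_subset (hYs.trans Finset.subset_union_right)
          Finset.subset_union_left
      · rw [if_neg hvY] at hfY
        subst hfY
        exact ⟨hYs.trans Finset.subset_union_right, circ_sub hd hv hYs hvY hYc⟩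
    · by_cases hm : v ∈ T''.minSet
      · rw [if_pos hm, Finset.mem_singleton] at hZm
        subst hZm
        exact ⟨Finset.subset_union_left, circ_X₁ hd hv hT' hm⟩
      · rw [if_neg hm] at hZm
        exact absurd hZm (Finset.notMem_empty _)

lemma restrict_X₁ : (G).restrict T'.carrier = T' := by
  refine ext' ?_ ?_
  · show (T'.carrier ∪ T''.carrier) ∩ T'.carrier = T'.carrier
    ext a
    simp only [Finset.mem_inter, Finset.mem_union]
    exact ⟨fun h => h.2, fun h => ⟨Or.inl h, h⟩⟩
  · funext x y
    apply propext
    show ((G).le x y ∧ x ∈ T'.carrier ∧ y ∈ T'.carrier) ↔ T'.le x y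
    constructor
    · rintro ⟨h, hx, hy⟩
      exact (gle11 hd hv hx).1 h
    · intro h
      exact ⟨Or.inl h, (T'.mem_of_le h).1, (T'.mem_of_le h).2⟩

lemma restrict_X₂ : (G).restrict ((G).carrier \ T'.carrier) = T'' := by
  refine ext' ?_ ?_
  · show (T'.carrier ∪ T''.carrier) ∩ ((T'.carrier ∪ T''.carrier) \ T'.carrier) = T''.carrier
    ext a
    simp only [Finset.mem_inter, Finset.mem_sdiff, Finset.mem_union]
    constructor
    · rintro ⟨-, h2, h3⟩
      rcases h2 with h | h
      · exact absurd h h3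
      · exact h
    · intro h
      exact ⟨Or.inr h, Or.inr h, fun hh => Finset.disjoint_left.1 hd hh h⟩
  · funext x y
    apply propext
    show ((G).le x y ∧ x ∈ (G).carrier \ T'.carrier ∧ y ∈ (G).carrier \ T'.carrier) ↔
      T''.le x y
    constructor
    · rintro ⟨h, hx, hy⟩
      obtain ⟨hyc, hy1⟩ := Finset.mem_sdiff.1 hy
      have hy2 : y ∈ T''.carrier := by
        rcases Finset.mem_union.1 hyc with hh | hh
        · exact absurd hh hy1
        · exact hh
      exact (gle22 hd hv hy2).1 h
    · intro h
      have hx2 := (T''.mem_of_le h).1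
      have hy2 := (T''.mem_of_le h).2
      exact ⟨Or.inr (Or.inl h),
        Finset.mem_sdiff.2 ⟨Finset.mem_union_right _ hx2,
          fun hh => Finset.disjoint_left.1 hd hh hx2⟩,
        Finset.mem_sdiff.2 ⟨Finset.mem_union_right _ hy2,
          fun hh => Finset.disjoint_left.1 hd hh hy2⟩⟩

lemma restrict_union_eq {Y : Finset α} (hYs : Y ⊆ T''.carrier) (hvY : v ∈ Y) :
    (G).restrict (Y ∪ T'.carrier) = graft T' (T''.restrict Y) v := by
  have hd2 : Disjoint T'.carrier (T''.restrict Y).carrier :=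
    hd.mono_right Finset.inter_subset_left
  have hv2 : v ∈ (T''.restrict Y).carrier := Finset.mem_inter.2 ⟨hv, hvY⟩
  rw [graft_eq T' (T''.restrict Y) v hd2 hv2]
  refine ext' ?_ ?_
  · show (T'.carrier ∪ T''.carrier) ∩ (Y ∪ T'.carrier) = T'.carrier ∪ T''.carrier ∩ Y
    ext a
    simp only [Finset.mem_inter, Finset.mem_union]
    constructor
    · rintro ⟨h1, h2⟩
      rcases h2 with h | h
      · exact Or.inr ⟨hYs h, h⟩
      · exact Or.inl h
    · rintro (h | ⟨h1, h2⟩)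
      · exact ⟨Or.inl h, Or.inr h⟩
      · exact ⟨Or.inr h1, Or.inl h2⟩
  · funext x y
    apply propext
    show ((G).le x y ∧ x ∈ Y ∪ T'.carrier ∧ y ∈ Y ∪ T'.carrier) ↔
      (T'.le x y ∨ (T''.le x y ∧ x ∈ Y ∧ y ∈ Y) ∨
        ((T''.le x v ∧ x ∈ Y ∧ v ∈ Y) ∧ y ∈ T'.carrier))
    constructor
    · rintro ⟨h, hx, hy⟩
      rcases h with h | h | ⟨h1, h2⟩
      · exact Or.inl h
      · have hx2 := (T''.mem_of_le h).1
        have hy2 := (T''.mem_of_le h).2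
        have hxY : x ∈ Y := by
          rcases Finset.mem_union.1 hx with hh | hh
          · exact hh
          · exact absurd hh (fun hhh => Finset.disjoint_left.1 hd hhh hx2)
        have hyY : y ∈ Y := by
          rcases Finset.mem_union.1 hy with hh | hh
          · exact hh
          · exact absurd hh (fun hhh => Finset.disjoint_left.1 hd hhh hy2)
        exact Or.inr (Or.inl ⟨h, hxY, hyY⟩)
      · have hx2 := (T''.mem_of_le h1).1
        have hxY : x ∈ Y := by
          rcases Finset.mem_union.1 hx with hh | hh
          · exact hh
          · exact absurd hh (fun hhh => Finset.disjoint_left.1 hd hhh hx2)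
        exact Or.inr (Or.inr ⟨⟨h1, hxY, hvY⟩, h2⟩)
    · rintro (h | ⟨h, hxY, hyY⟩ | ⟨⟨h1, hxY, -⟩, hy1⟩)
      · exact ⟨Or.inl h, Finset.mem_union_right _ (T'.mem_of_le h).1,
          Finset.mem_union_right _ (T'.mem_of_le h).2⟩
      · exact ⟨Or.inr (Or.inl h), Finset.mem_union_left _ hxY, Finset.mem_union_left _ hyY⟩
      · exact ⟨Or.inr (Or.inr ⟨h1, hy1⟩), Finset.mem_union_left _ hxY,
          Finset.mem_union_right _ hy1⟩

lemma restrict_union_compl {Y : Finset α} (hYs : Y ⊆ T''.carrier) :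
    (G).restrict ((G).carrier \ (Y ∪ T'.carrier)) = T''.restrict (T''.carrier \ Y) := by
  refine ext' ?_ ?_
  · show (T'.carrier ∪ T''.carrier) ∩ ((T'.carrier ∪ T''.carrier) \ (Y ∪ T'.carrier)) =
      T''.carrier ∩ (T''.carrier \ Y)
    ext a
    simp only [Finset.mem_inter, Finset.mem_sdiff, Finset.mem_union, not_or]
    constructor
    · rintro ⟨-, h2, h3, h4⟩
      rcases h2 with h | h
      · exact absurd h h4
      · exact ⟨h, h, h3⟩
    · rintro ⟨h1, -, h3⟩
      exact ⟨Or.inr h1, Or.inr h1, h3, fun hh => Finset.disjoint_left.1 hd hh h1⟩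
  · funext x y
    apply propext
    show ((G).le x y ∧ x ∈ (G).carrier \ (Y ∪ T'.carrier) ∧
        y ∈ (G).carrier \ (Y ∪ T'.carrier)) ↔
      (T''.le x y ∧ x ∈ T''.carrier \ Y ∧ y ∈ T''.carrier \ Y)
    constructor
    · rintro ⟨h, hx, hy⟩
      obtain ⟨hxc, hx'⟩ := Finset.mem_sdiff.1 hx
      obtain ⟨hyc, hy'⟩ := Finset.mem_sdiff.1 hy
      rw [Finset.mem_union, not_or] at hx' hy'
      have hx2 : x ∈ T''.carrier := by
        rcases Finset.mem_union.1 hxc with hh | hh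
        · exact absurd hh hx'.2
        · exact hh
      have hy2 : y ∈ T''.carrier := by
        rcases Finset.mem_union.1 hyc with hh | hh
        · exact absurd hh hy'.2
        · exact hh
      exact ⟨(gle22 hd hv hy2).1 h, Finset.mem_sdiff.2 ⟨hx2, hx'.1⟩,
        Finset.mem_sdiff.2 ⟨hy2, hy'.1⟩⟩
    · rintro ⟨h, hx, hy⟩
      obtain ⟨hx2, hxY⟩ := Finset.mem_sdiff.1 hx
      obtain ⟨hy2, hyY⟩ := Finset.mem_sdiff.1 hy
      refine ⟨Or.inr (Or.inl h), ?_, ?_⟩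
      · exact Finset.mem_sdiff.2 ⟨Finset.mem_union_right _ hx2,
          by rw [Finset.mem_union, not_or]
             exact ⟨hxY, fun hh => Finset.disjoint_left.1 hd hh hx2⟩⟩
      · exact Finset.mem_sdiff.2 ⟨Finset.mem_union_right _ hy2,
          by rw [Finset.mem_union, not_or]
             exact ⟨hyY, fun hh => Finset.disjoint_left.1 hd hh hy2⟩⟩

lemma restrict_sub_eq {Y : Finset α} (hYs : Y ⊆ T''.carrier) :
    (G).restrict Y = T''.restrict Y := by
  refine ext' ?_ ?_
  · show (T'.carrier ∪ T''.carrier) ∩ Y = T''.carrier ∩ Y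
    ext a
    simp only [Finset.mem_inter, Finset.mem_union]
    constructor
    · rintro ⟨-, h2⟩
      exact ⟨hYs h2, h2⟩
    · rintro ⟨h1, h2⟩
      exact ⟨Or.inr h1, h2⟩
  · funext x y
    apply propext
    show ((G).le x y ∧ x ∈ Y ∧ y ∈ Y) ↔ (T''.le x y ∧ x ∈ Y ∧ y ∈ Y)
    constructor
    · rintro ⟨h, hx, hy⟩
      exact ⟨(gle22 hd hv (hYs hy)).1 h, hx, hy⟩
    · rintro ⟨h, hx, hy⟩
      exact ⟨Or.inr (Or.inl h), hx, hy⟩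

lemma restrict_sub_compl {Y : Finset α} (hYs : Y ⊆ T''.carrier) (hvY : v ∉ Y) :
    (G).restrict ((G).carrier \ Y) = graft T' (T''.restrict (T''.carrier \ Y)) v := by
  have hd2 : Disjoint T'.carrier (T''.restrict (T''.carrier \ Y)).carrier :=
    hd.mono_right Finset.inter_subset_left
  have hv2 : v ∈ (T''.restrict (T''.carrier \ Y)).carrier :=
    Finset.mem_inter.2 ⟨hv, Finset.mem_sdiff.2 ⟨hv, hvY⟩⟩
  rw [graft_eq T' (T''.restrict (T''.carrier \ Y)) v hd2 hv2]
  refine ext' ?_ ?_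
  · show (T'.carrier ∪ T''.carrier) ∩ ((T'.carrier ∪ T''.carrier) \ Y) =
      T'.carrier ∪ T''.carrier ∩ (T''.carrier \ Y)
    ext a
    simp only [Finset.mem_inter, Finset.mem_sdiff, Finset.mem_union]
    constructor
    · rintro ⟨h1, -, h3⟩
      rcases h1 with h | h
      · exact Or.inl h
      · exact Or.inr ⟨h, h, h3⟩
    · rintro (h | ⟨h1, -, h3⟩)
      · exact ⟨Or.inl h, Or.inl h, fun hh => Finset.disjoint_left.1 hd h (hYs hh)⟩
      · exact ⟨Or.inr h1, Or.inr h1, h3⟩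
  · funext x y
    apply propext
    show ((G).le x y ∧ x ∈ (G).carrier \ Y ∧ y ∈ (G).carrier \ Y) ↔
      (T'.le x y ∨
        (T''.le x y ∧ x ∈ T''.carrier \ Y ∧ y ∈ T''.carrier \ Y) ∨
        ((T''.le x v ∧ x ∈ T''.carrier \ Y ∧ v ∈ T''.carrier \ Y) ∧ y ∈ T'.carrier))
    constructor
    · rintro ⟨h, hx, hy⟩
      obtain ⟨hxc, hxY⟩ := Finset.mem_sdiff.1 hx
      obtain ⟨hyc, hyY⟩ := Finset.mem_sdiff.1 hy
      rcases h with h | h | ⟨h1, h2⟩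
      · exact Or.inl h
      · exact Or.inr (Or.inl ⟨h, Finset.mem_sdiff.2 ⟨(T''.mem_of_le h).1, hxY⟩,
          Finset.mem_sdiff.2 ⟨(T''.mem_of_le h).2, hyY⟩⟩)
      · exact Or.inr (Or.inr ⟨⟨h1, Finset.mem_sdiff.2 ⟨(T''.mem_of_le h1).1, hxY⟩,
          Finset.mem_sdiff.2 ⟨hv, hvY⟩⟩, h2⟩)
    · rintro (h | ⟨h, hx, hy⟩ | ⟨⟨h1, hx, -⟩, hy1⟩)
      · have hx1 := (T'.mem_of_le h).1
        have hy1 := (T'.mem_of_le h).2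
        exact ⟨Or.inl h,
          Finset.mem_sdiff.2 ⟨Finset.mem_union_left _ hx1,
            fun hh => Finset.disjoint_left.1 hd hx1 (hYs hh)⟩,
          Finset.mem_sdiff.2 ⟨Finset.mem_union_left _ hy1,
            fun hh => Finset.disjoint_left.1 hd hy1 (hYs hh)⟩⟩
      · obtain ⟨hx2, hxY⟩ := Finset.mem_sdiff.1 hx
        obtain ⟨hy2, hyY⟩ := Finset.mem_sdiff.1 hy
        exact ⟨Or.inr (Or.inl h),
          Finset.mem_sdiff.2 ⟨Finset.mem_union_right _ hx2, hxY⟩,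
          Finset.mem_sdiff.2 ⟨Finset.mem_union_right _ hy2, hyY⟩⟩
      · obtain ⟨hx2, hxY⟩ := Finset.mem_sdiff.1 hx
        exact ⟨Or.inr (Or.inr ⟨h1, hy1⟩),
          Finset.mem_sdiff.2 ⟨Finset.mem_union_right _ hx2, hxY⟩,
          Finset.mem_sdiff.2 ⟨Finset.mem_union_left _ hy1,
            fun hh => Finset.disjoint_left.1 hd hy1 (hYs hh)⟩⟩

end Graft

lemma delta_graft_main (T' T'' : FinPre α)
    (hT' : T'.Connected) (hT'' : T''.Connected)
    (hd : Disjoint T'.carrier T''.carrier) :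
    (∑ v ∈ T''.carrier, FinPre.delta (FinPre.graft T' T'' v))
      = Finsupp.single (T', T'') (1 : ℚ)
        + ((T''.minSet.card : ℚ))⁻¹ • ∑ Y ∈ T''.circSet,
          ((∑ v ∈ (T''.restrict Y).carrier,
              Finsupp.single
                (FinPre.graft T' (T''.restrict Y) v,
                  T''.restrict (T''.carrier \ Y)) (1 : ℚ))
            + ∑ v ∈ (T''.restrict (T''.carrier \ Y)).carrier,
              Finsupp.single
                (T''.restrict Y,
                  FinPre.graft T' (T''.restrict (T''.carrier \ Y)) v) (1 : ℚ)) := by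
  have hmne : T''.minSet.Nonempty := T''.minSet_nonempty hT''.1
  have hm0 : (T''.minSet.card : ℚ) ≠ 0 := by
    exact Nat.cast_ne_zero.mpr (Finset.card_ne_zero.mpr hmne)
  have key : ∀ w ∈ T''.carrier, FinPre.delta (FinPre.graft T' T'' w) =
      (T''.minSet.card : ℚ)⁻¹ •
        ((∑ Y ∈ T''.circSet,
          (if w ∈ Y then
            Finsupp.single (graft T' (T''.restrict Y) w,
              T''.restrict (T''.carrier \ Y)) (1 : ℚ)
          else
            Finsupp.single (T''.restrict Y,
              graft T' (T''.restrict (T''.carrier \ Y)) w) (1 : ℚ)))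
        + (if w ∈ T''.minSet then Finsupp.single (T', T'') (1 : ℚ) else 0)) := by
    intro w hw
    rw [graft_eq T' T'' w hd hw]
    unfold delta
    rw [gminSet hd hw, circSet_graft hd hw hT']
    have hdisj : Disjoint
        (T''.circSet.image fun Y => if w ∈ Y then Y ∪ T'.carrier else Y)
        (if w ∈ T''.minSet then ({T'.carrier} : Finset (Finset α)) else ∅) := by
      by_cases hm : w ∈ T''.minSet
      · rw [if_pos hm, Finset.disjoint_singleton_right]
        intro hmem
        obtain ⟨Y, hY, hfY⟩ := Finset.mem_image.1 hmem
        obtain ⟨hYs, hYc⟩ := mem_circSet.1 hY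
        obtain ⟨y, hy⟩ := circ_nonempty hYc
        by_cases hwY : w ∈ Y
        · rw [if_pos hwY] at hfY
          have hy1 : y ∈ T'.carrier := by
            rw [← hfY]; exact Finset.mem_union_left _ hy
          exact Finset.disjoint_left.1 hd hy1 (hYs hy)
        · rw [if_neg hwY] at hfY
          have hy1 : y ∈ T'.carrier := by rw [← hfY]; exact hy
          exact Finset.disjoint_left.1 hd hy1 (hYs hy)
      · rw [if_neg hm]
        exact Finset.disjoint_empty_right _
    rw [Finset.sum_union hdisj, Finset.sum_image (graft_inj hd hT'.1)]
    congr 1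
    congr 1
    · refine Finset.sum_congr rfl fun Y hY => ?_
      have hYs := (mem_circSet.1 hY).1
      by_cases hwY : w ∈ Y
      · rw [if_pos hwY, if_pos hwY, restrict_union_eq hd hw hYs hwY,
          restrict_union_compl hd hw hYs]
      · rw [if_neg hwY, if_neg hwY, restrict_sub_eq hd hw hYs,
          restrict_sub_compl hd hw hYs hwY]
    · by_cases hm : w ∈ T''.minSet
      · rw [if_pos hm, if_pos hm, Finset.sum_singleton, restrict_X₁ hd hw,
          restrict_X₂ hd hw]
      · rw [if_neg hm, if_neg hm, Finset.sum_empty]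
  rw [Finset.sum_congr rfl key, ← Finset.smul_sum, Finset.sum_add_distrib]
  have h1 : (∑ w ∈ T''.carrier,
      (if w ∈ T''.minSet then Finsupp.single (T', T'') (1 : ℚ) else 0)) =
      T''.minSet.card • Finsupp.single (T', T'') (1 : ℚ) := by
    rw [Finset.sum_ite_mem, Finset.inter_eq_right.2 T''.minSet_subset,
      Finset.sum_const]
  have h2 : (∑ w ∈ T''.carrier, ∑ Y ∈ T''.circSet,
      (if w ∈ Y then
        Finsupp.single (graft T' (T''.restrict Y) w,
          T''.restrict (T''.carrier \ Y)) (1 : ℚ)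
      else
        Finsupp.single (T''.restrict Y,
          graft T' (T''.restrict (T''.carrier \ Y)) w) (1 : ℚ))) =
      ∑ Y ∈ T''.circSet,
        ((∑ v ∈ (T''.restrict Y).carrier,
            Finsupp.single
              (FinPre.graft T' (T''.restrict Y) v,
                T''.restrict (T''.carrier \ Y)) (1 : ℚ))
          + ∑ v ∈ (T''.restrict (T''.carrier \ Y)).carrier,
            Finsupp.single
              (T''.restrict Y,
                FinPre.graft T' (T''.restrict (T''.carrier \ Y)) v) (1 : ℚ)) := by
    rw [Finset.sum_comm]
    refine Finset.sum_congr rfl fun Y hY => ?_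
    have e1 : T''.carrier.filter (fun w => w ∈ Y) = (T''.restrict Y).carrier := by
      show _ = T''.carrier ∩ Y
      ext a
      simp only [Finset.mem_filter, Finset.mem_inter]
    have e2 : T''.carrier.filter (fun w => w ∉ Y) =
        (T''.restrict (T''.carrier \ Y)).carrier := by
      show _ = T''.carrier ∩ (T''.carrier \ Y)
      ext a
      simp only [Finset.mem_filter, Finset.mem_inter, Finset.mem_sdiff]
      exact ⟨fun h => ⟨h.1, h.1, h.2⟩, fun h => ⟨h.1, h.2.2⟩⟩
    rw [Finset.sum_ite, e1, e2]
  rw [h1, h2, smul_add, add_comm]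
  congr 1
  rw [← Nat.cast_smul_eq_nsmul ℚ, smul_smul, inv_mul_cancel₀ hm0, one_smul]

end Aux

end FinPre

/-- Compatibility of the coproduct `δ` with the pre-Lie product `↘` on
finite connected preorders:
`δ(T' ↘ T'') = T' ⊗ T'' + (T' ⊗ 1) ↘ δ(T'') + (1 ⊗ T') ↘ δ(T'')`, in the explicit form
`Σ_{v ∈ X₂} δ(T' ↘_v T'') = T' ⊗ T'' + (1/|min(T'')|) Σ_{Y ◎ T''}
[(T' ↘ T''|_Y) ⊗ T''|_{X₂\Y} + T''|_Y ⊗ (T' ↘ T''|_{X₂\Y})]`. -/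
theorem delta_graft_preorder {α : Type*} [DecidableEq α] (T' T'' : FinPre α)
    (hT' : T'.Connected) (hT'' : T''.Connected)
    (hd : Disjoint T'.carrier T''.carrier) :
    (∑ v ∈ T''.carrier, FinPre.delta (FinPre.graft T' T'' v))
      = Finsupp.single (T', T'') (1 : ℚ)
        + ((T''.minSet.card : ℚ))⁻¹ • ∑ Y ∈ T''.circSet,
          ((∑ v ∈ (T''.restrict Y).carrier,
              Finsupp.single
                (FinPre.graft T' (T''.restrict Y) v,
                  T''.restrict (T''.carrier \ Y)) (1 : ℚ))
            + ∑ v ∈ (T''.restrict (T''.carrier \ Y)).carrier,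
              Finsupp.single
                (T''.restrict Y,
                  FinPre.graft T' (T''.restrict (T''.carrier \ Y)) v) (1 : ℚ)) := by
  exact FinPre.delta_graft_main T' T'' hT' hT'' hd
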